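/- Fix k ∈ ℝ, k ≠ 0. Let α, ᾱ₃ : ℝ² → ℝ be radial functions of class C¹, and let ᾱ₁, ᾱ₂, β, γ : ℝ² → ℝ be of class C¹. Define u_ρ(x) := (α(x)x₁, α(x)x₂, 0, ᾱ₁(x), ᾱ₂(x), ᾱ₃(x)), u_τ(x) := (−β(x)x₂, β(x)x₁, 0, 0, 0, 0), and u_ζ(x) := (0, 0, γ(x), 0, 0, 0). Then for every x ∈ ℝ², ⟨curl∘u_ρ(x), curl∘u_τ(x)⟩ = 0 and ⟨curl∘u_τ(x), curl∘u_ζ(x)⟩ = 0, where ⟨·,·⟩ is the Euclidean inner product on ℝ⁶. -/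

import Mathlib

/-- First partial derivative of a function on ℝ². -/
noncomputable def pd1 (f : ℝ × ℝ → ℝ) (x : ℝ × ℝ) : ℝ := fderiv ℝ f x (1, 0)

/-- Second partial derivative of a function on ℝ². -/
noncomputable def pd2 (f : ℝ × ℝ → ℝ) (x : ℝ × ℝ) : ℝ := fderiv ℝ f x (0, 1)

/-- The operator `curl∘` acting on fields `u : ℝ² → ℝ⁶`, with wave number `k`. -/
noncomputable def curlC (k : ℝ) (u : ℝ × ℝ → Fin 6 → ℝ) (x : ℝ × ℝ) : Fin 6 → ℝ :=
  ![pd2 (fun y => u y 2) x - k * u x 4,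
    k * u x 3 - pd1 (fun y => u y 2) x,
    pd1 (fun y => u y 1) x - pd2 (fun y => u y 0) x,
    pd2 (fun y => u y 5) x + k * u x 1,
    -(k * u x 0) - pd1 (fun y => u y 5) x,
    pd1 (fun y => u y 4) x - pd2 (fun y => u y 3) x]

/-- Rotation of ℝ² by the angle θ. -/
noncomputable def rot (θ : ℝ) (x : ℝ × ℝ) : ℝ × ℝ :=
  (x.1 * Real.cos θ - x.2 * Real.sin θ, x.1 * Real.sin θ + x.2 * Real.cos θ)

/-- A function on ℝ² is radial if it is invariant under all rotations. -/
def Radial (h : ℝ × ℝ → ℝ) : Prop := ∀ θ : ℝ, ∀ x : ℝ × ℝ, h (rot θ x) = h x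


lemma radial_ang {h : ℝ × ℝ → ℝ} (hd : Differentiable ℝ h) (hr : Radial h) (x : ℝ × ℝ) :
    x.1 * pd2 h x - x.2 * pd1 h x = 0 := by
  have hf : HasDerivAt (fun θ => rot θ x) (-x.2, x.1) 0 := by
    have h1 : HasDerivAt (fun θ : ℝ => x.1 * Real.cos θ - x.2 * Real.sin θ)
        (x.1 * (-Real.sin 0) - x.2 * Real.cos 0) 0 :=
      ((Real.hasDerivAt_cos 0).const_mul x.1).sub ((Real.hasDerivAt_sin 0).const_mul x.2)
    have h2 : HasDerivAt (fun θ : ℝ => x.1 * Real.sin θ + x.2 * Real.cos θ)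
        (x.1 * Real.cos 0 + x.2 * (-Real.sin 0)) 0 :=
      ((Real.hasDerivAt_sin 0).const_mul x.1).add ((Real.hasDerivAt_cos 0).const_mul x.2)
    simpa [rot] using h1.prodMk h2
  have hrot0 : rot 0 x = x := by simp [rot]
  have hcomp : HasDerivAt (fun θ => h (rot θ x)) (fderiv ℝ h x (-x.2, x.1)) 0 := by
    have hF : HasFDerivAt h (fderiv ℝ h x) (rot 0 x) := by
      rw [hrot0]; exact (hd x).hasFDerivAt
    exact hF.comp_hasDerivAt 0 hf
  have hconst : (fun θ => h (rot θ x)) = fun _ => h x := funext fun θ => hr θ x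
  have h0 : fderiv ℝ h x (-x.2, x.1) = 0 := by
    have := hcomp
    rw [hconst] at this
    simpa using this.deriv.symm.trans (deriv_const 0 (h x))
  have hlin : ((-x.2, x.1) : ℝ × ℝ) = (-x.2) • ((1:ℝ), (0:ℝ)) + x.1 • ((0:ℝ), (1:ℝ)) := by
    simp [Prod.ext_iff]
  rw [hlin] at h0
  simp only [map_add, map_smul, smul_eq_mul] at h0
  simp only [pd1, pd2]
  linarith

lemma pd1_mul_snd {f : ℝ × ℝ → ℝ} {x : ℝ × ℝ} (hf : DifferentiableAt ℝ f x) :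
    pd1 (fun y => f y * y.2) x = pd1 f x * x.2 := by
  have h := hf.hasFDerivAt.mul (hasFDerivAt_snd (𝕜 := ℝ) (p := x))
  rw [pd1, show (fun y => f y * y.2) = f * Prod.snd from rfl, h.fderiv]
  simp [pd1]; ring

lemma pd2_mul_fst {f : ℝ × ℝ → ℝ} {x : ℝ × ℝ} (hf : DifferentiableAt ℝ f x) :
    pd2 (fun y => f y * y.1) x = pd2 f x * x.1 := by
  have h := hf.hasFDerivAt.mul (hasFDerivAt_fst (𝕜 := ℝ) (p := x))
  rw [pd2, show (fun y => f y * y.1) = f * Prod.fst from rfl, h.fderiv]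
  simp [pd2]; ring

lemma vec6_five {α : Type*} (v0 v1 v2 v3 v4 v5 : α) : ![v0,v1,v2,v3,v4,v5] 5 = v5 := rfl

/-- The curls of the components `u_ρ`, `u_τ`, `u_ζ` of a symmetric field are pointwise
orthogonal: `⟨curl∘ u_ρ, curl∘ u_τ⟩ = ⟨curl∘ u_τ, curl∘ u_ζ⟩ = 0`. -/
theorem stmt15 (k : ℝ) (hk : k ≠ 0)
    (a b3 b1 b2 β γ : ℝ × ℝ → ℝ)
    (ha : ContDiff ℝ 1 a) (hb1 : ContDiff ℝ 1 b1) (hb2 : ContDiff ℝ 1 b2)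
    (hb3 : ContDiff ℝ 1 b3) (hβ : ContDiff ℝ 1 β) (hγ : ContDiff ℝ 1 γ)
    (har : Radial a) (hb3r : Radial b3) :
    ∀ x : ℝ × ℝ,
      (∑ i, curlC k (fun y => ![a y * y.1, a y * y.2, 0, b1 y, b2 y, b3 y]) x i *
            curlC k (fun y => ![-(β y * y.2), β y * y.1, 0, 0, 0, 0]) x i = 0) ∧
      (∑ i, curlC k (fun y => ![-(β y * y.2), β y * y.1, 0, 0, 0, 0]) x i *
            curlC k (fun y => ![0, 0, γ y, 0, 0, 0]) x i = 0) := by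
  intro x
  have hda := ha.differentiable one_ne_zero
  have haang := radial_ang hda har x
  have hb3ang := radial_ang (hb3.differentiable one_ne_zero) hb3r x
  constructor
  · simp only [curlC, Fin.sum_univ_six, Matrix.cons_val_zero, Matrix.cons_val_one,
      Matrix.head_cons, Matrix.cons_val_two, Matrix.tail_cons, Matrix.cons_val_three,
      Matrix.cons_val_four, vec6_five]
    rw [pd1_mul_snd (hda x), pd2_mul_fst (hda x)]
    simp only [pd1, pd2, fderiv_fun_const, ContinuousLinearMap.zero_apply, Pi.zero_apply]
    have h2 : fderiv ℝ a x (1,0) * x.2 - fderiv ℝ a x (0,1) * x.1 = 0 := by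
      simp only [pd1, pd2] at haang; linarith
    have h3 : x.1 * fderiv ℝ b3 x (0,1) - x.2 * fderiv ℝ b3 x (1,0) = 0 := by
      simp only [pd1, pd2] at hb3ang; linarith
    linear_combination (fderiv ℝ (fun y => β y * y.1) x (1,0) -
      fderiv ℝ (fun y => -(β y * y.2)) x (0,1)) * h2 + (k * β x) * h3
  · simp only [curlC, Fin.sum_univ_six, Matrix.cons_val_zero, Matrix.cons_val_one,
      Matrix.head_cons, Matrix.cons_val_two, Matrix.tail_cons, Matrix.cons_val_three,
      Matrix.cons_val_four, vec6_five]
    simp only [pd1, pd2, fderiv_fun_const, ContinuousLinearMap.zero_apply, Pi.zero_apply]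
    ring
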